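/- Let (λ, f) be a flagged strict partition of length r, and if r ≥ 2 assume λ_{r−1} > f_{r−1} or λ_r > f_r. Then Q_{λ,f}(x;z|b) = Σ_μ Q_μ(x|b) · (s̃_{λ̄/μ̄, f}(z|b))^⋆, where the sum is over strict partitions μ ⊆ λ (padded by zeros to r parts) such that μ̄ = (μ_1, μ_2 + 1, …, μ_r + r − 1) is a partition, λ̄_i = λ_i + i − 1, and ⋆ is the substitution b_{−i} ↦ −b_{i+1} for all i ≥ 0. The identity holds for every number n of x-variables. -/

import Mathlib

open Finset

noncomputable section

variable {R : Type*} [CommRing R]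

/-- The formal power series `1/(1 - x·u)`. -/
def geomSeries (x : R) : PowerSeries R := PowerSeries.mk fun m => x ^ m

/-- `e_u^{[k]}(c)`: the power series `∏_{i=1}^k (1 + c_i u)` for `k ≥ 0`, and
`∏_{i=1}^{-k} (1 - c_i u)⁻¹` for `k < 0`.  The sequence `c` is read at indices `1, 2, …`. -/
def eSer (k : ℤ) (c : ℕ → R) : PowerSeries R :=
  if 0 ≤ k then ∏ i ∈ Finset.range k.toNat, (1 + PowerSeries.C (c (i + 1)) * PowerSeries.X)
  else ∏ i ∈ Finset.range (-k).toNat, geomSeries (c (i + 1))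

/-- `q_u(x) = ∏_{i=1}^n (1 + x_i u)/(1 - x_i u)`, with `n` x-variables. -/
def qSer (n : ℕ) (x : ℕ → R) : PowerSeries R :=
  ∏ i ∈ Finset.range n,
    ((1 + PowerSeries.C (x (i + 1)) * PowerSeries.X) * geomSeries (x (i + 1)))

/-- The coefficient of `u^m` (`m : ℤ`) of a power series; zero when `m < 0`. -/
def coeffZ (m : ℤ) (φ : PowerSeries R) : R :=
  if 0 ≤ m then PowerSeries.coeff m.toNat φ else 0

/-- `q_m^{[ℓ]}(x|c)`: the coefficient of `u^m` in `q_u(x)·e_u^{[ℓ]}(c)`. -/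
def qC (m ℓ : ℤ) (n : ℕ) (x c : ℕ → R) : R := coeffZ m (qSer n x * eSer ℓ c)

/-- `q_m^{[k|ℓ]}(x;z|c)`: the coefficient of `u^m` in `q_u(x)·e_u^{[k]}(z)·e_u^{[ℓ]}(c)`. -/
def qC2 (m k ℓ : ℤ) (n : ℕ) (x z c : ℕ → R) : R :=
  coeffZ m (qSer n x * eSer k z * eSer ℓ c)

/-- `e_m^{[k]}(c)`. -/
def eC (m k : ℤ) (c : ℕ → R) : R := coeffZ m (eSer k c)

/-- `e_m^{[k|ℓ]}(z|c)`: the coefficient of `u^m` in `e_u^{[k]}(z)·e_u^{[ℓ]}(c)`. -/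
def eC2 (m k ℓ : ℤ) (z c : ℕ → R) : R := coeffZ m (eSer k z * eSer ℓ c)

/-- Extension of `b` to all integer indices using the convention `b_{-i} = -b_{i+1}` for
`i ≥ 0`; positive indices are untouched.  This also implements the `⋆` substitution. -/
def bext (b : ℤ → R) : ℤ → R := fun j => if 0 < j then b j else -b (1 - j)

/-- `ε(0) = 1` and `ε(m) = 2·(-1)^m` for `m ≥ 1`. -/
def pfEps (m : ℕ) : ℤ := if m = 0 then 1 else 2 * (-1) ^ m

/-- The subscript `α_i + Σ_{j>i} m_{ij} − Σ_{j<i} m_{ji}` in the Schur–Pfaffian. -/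
def pfIdx {r : ℕ} (α : Fin r → ℤ) (m : Fin r → Fin r → ℕ) (i : Fin r) : ℤ :=
  α i + ∑ j, (if i < j then (m i j : ℤ) else 0) - ∑ j, (if j < i then (m j i : ℤ) else 0)

/-- The Schur–Pfaffian `Pf[c^{(1)}_{α_1} ⋯ c^{(r)}_{α_r}]`, as the (finitely supported) sum
over tuples of nonnegative integers `(m_{ij})_{1 ≤ i < j ≤ r}`. -/
def schurPf {r : ℕ} (c : Fin r → ℤ → R) (α : Fin r → ℤ) : R :=
  ∑ᶠ m ∈ {m : Fin r → Fin r → ℕ | ∀ i j, ¬ i < j → m i j = 0},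
    (∏ i, ∏ j, if i < j then (pfEps (m i j) : R) else 1) * ∏ i, c i (pfIdx α m i)

/-- The alphabet of primed, unmarked and circled numbers. -/
inductive MSTEntry where
  | prime : ℕ → MSTEntry
  | unmarked : ℕ → MSTEntry
  | circ : ℕ → MSTEntry
deriving DecidableEq

namespace MSTEntry

/-- Whether an entry is circled (`1`) or not (`0`). -/
def isCirc : MSTEntry → ℕ
  | circ _ => 1
  | _ => 0

/-- Key realizing the order `1' < 1 < 2' < 2 < ⋯` within each class. -/
def key : MSTEntry → ℕ
  | prime k => 2 * k - 1
  | unmarked k => 2 * k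
  | circ k => k

/-- The numeric value of an entry. -/
def val : MSTEntry → ℕ
  | prime k => k
  | unmarked k => k
  | circ k => k

/-- The total order `1' < 1 < 2' < 2 < ⋯ < 1° < 2° < ⋯` on entries of positive value. -/
def le (a b : MSTEntry) : Prop :=
  a.isCirc < b.isCirc ∨ (a.isCirc = b.isCirc ∧ a.key ≤ b.key)

end MSTEntry

/-- The shifted Young diagram of a strict partition `λ` of length `r`:
boxes `(i, j)` with `1 ≤ i ≤ r` and `i ≤ j ≤ λ_i + i - 1` (rows and columns 1-indexed). -/
def shiftedDiag (r : ℕ) (lam : ℕ → ℕ) : Set (ℕ × ℕ) :=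
  {p | 1 ≤ p.1 ∧ p.1 ≤ r ∧ p.1 ≤ p.2 ∧ p.2 ≤ lam p.1 + p.1 - 1}

/-- `T` is a marked shifted tableau of the flagged strict partition `(λ, f)` whose unmarked
and primed entries have numeric value at most `n` (normalized to `unmarked 0` off the
diagram). -/
def IsMST (n r : ℕ) (lam f : ℕ → ℕ) (T : ℕ × ℕ → MSTEntry) : Prop :=
  (∀ p, p ∉ shiftedDiag r lam → T p = .unmarked 0) ∧
  (∀ p ∈ shiftedDiag r lam, 1 ≤ (T p).val) ∧
  (∀ i j j', (i, j) ∈ shiftedDiag r lam → (i, j') ∈ shiftedDiag r lam → j ≤ j' →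
    (T (i, j)).le (T (i, j'))) ∧
  (∀ i i' j, (i, j) ∈ shiftedDiag r lam → (i', j) ∈ shiftedDiag r lam → i ≤ i' →
    (T (i, j)).le (T (i', j))) ∧
  (∀ i i' j k k', (i, j) ∈ shiftedDiag r lam → (i', j) ∈ shiftedDiag r lam → i < i' →
    T (i, j) = .unmarked k → T (i', j) = .unmarked k' → k < k') ∧
  (∀ i j j' k k', (i, j) ∈ shiftedDiag r lam → (i, j') ∈ shiftedDiag r lam → j < j' →
    T (i, j) = .prime k → T (i, j') = .prime k' → k < k') ∧
  (∀ i j j' k k', (i, j) ∈ shiftedDiag r lam → (i, j') ∈ shiftedDiag r lam → j < j' →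
    T (i, j) = .circ k → T (i, j') = .circ k' → k < k') ∧
  (∀ p ∈ shiftedDiag r lam, (T p).le (.circ (f p.1))) ∧
  (∀ p ∈ shiftedDiag r lam, ∀ k, (T p = .unmarked k ∨ T p = .prime k) → k ≤ n)

/-- The factor of the weight `(xz|b)^T` contributed by the entry at box `p`.  The convention
`b_{-i} = -b_{i+1}` is implemented by `bext`. -/
def mstFactor (x z : ℕ → R) (b : ℤ → R) (p : ℕ × ℕ) : MSTEntry → R
  | .unmarked k => x k + bext b ((p.2 : ℤ) - (p.1 : ℤ))
  | .prime k => x k - bext b ((p.2 : ℤ) - (p.1 : ℤ))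
  | .circ k => z k + bext b ((k : ℤ) + (p.1 : ℤ) - (p.2 : ℤ))

/-- The weight `(xz|b)^T` of a marked shifted tableau. -/
def mstWeight (r : ℕ) (lam : ℕ → ℕ) (x z : ℕ → R) (b : ℤ → R) (T : ℕ × ℕ → MSTEntry) : R :=
  ∏ i ∈ Finset.range r, ∏ j ∈ Finset.range (lam (i + 1)),
    mstFactor x z b (i + 1, i + 1 + j) (T (i + 1, i + 1 + j))

/-- The flagged factorial Q-function `Q_{λ,f}(x;z|b)`, with `n` x-variables. -/
def Qflag (n r : ℕ) (lam f : ℕ → ℕ) (x z : ℕ → R) (b : ℤ → R) : R :=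
  ∑ᶠ T ∈ {T : ℕ × ℕ → MSTEntry | IsMST n r lam f T}, mstWeight r lam x z b T

/-- Ivanov's factorial Q-function `Q_λ(x|b)`: the case of the zero flag (no circled
entries, so the z-variables do not occur). -/
def QIvanov (n r : ℕ) (lam : ℕ → ℕ) (x : ℕ → R) (b : ℤ → R) : R :=
  Qflag n r lam (fun _ => 0) x (fun _ => 0) b

/-- The skew Young diagram `κ/ν`: boxes `(i, j)` with `1 ≤ i ≤ r`, `ν_i < j ≤ κ_i`. -/
def skewDiag (r : ℕ) (kap nu : ℕ → ℕ) : Set (ℕ × ℕ) :=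
  {p | 1 ≤ p.1 ∧ p.1 ≤ r ∧ nu p.1 < p.2 ∧ p.2 ≤ kap p.1}

/-- `t` is a row-strict flagged tableau of `(κ/ν, f)` (normalized to `0` off the diagram). -/
def IsRST (r : ℕ) (kap nu f : ℕ → ℕ) (t : ℕ × ℕ → ℕ) : Prop :=
  (∀ p, p ∉ skewDiag r kap nu → t p = 0) ∧
  (∀ p ∈ skewDiag r kap nu, 1 ≤ t p) ∧
  (∀ i j j', (i, j) ∈ skewDiag r kap nu → (i, j') ∈ skewDiag r kap nu → j < j' →
    t (i, j) < t (i, j')) ∧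
  (∀ i i' j, (i, j) ∈ skewDiag r kap nu → (i', j) ∈ skewDiag r kap nu → i ≤ i' →
    t (i, j) ≤ t (i', j)) ∧
  (∀ p ∈ skewDiag r kap nu, t p ≤ f p.1)

/-- The weight `∏_{e ∈ T} (z_{|e|} + b_{|e| + r(e) - c(e)})` of a row-strict flagged tableau. -/
def rstWeight (r : ℕ) (kap nu : ℕ → ℕ) (z : ℕ → R) (b : ℤ → R) (t : ℕ × ℕ → ℕ) : R :=
  ∏ i ∈ Finset.range r, ∏ j ∈ Finset.range (kap (i + 1) - nu (i + 1)),
    (z (t (i + 1, nu (i + 1) + 1 + j)) +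
      b ((t (i + 1, nu (i + 1) + 1 + j) : ℤ) + ((i : ℤ) + 1) - ((nu (i + 1) : ℤ) + 1 + (j : ℤ))))

/-- The row-strict flagged skew factorial Schur polynomial `s̃_{κ/ν,f}(z|b)`. -/
def sTilde (r : ℕ) (kap nu f : ℕ → ℕ) (z : ℕ → R) (b : ℤ → R) : R :=
  ∑ᶠ t ∈ {t : ℕ × ℕ → ℕ | IsRST r kap nu f t}, rstWeight r kap nu z b t


/-- The factor of the weight `(xb)^T`: `x_k` for unmarked or primed `k`, `b_k` for circled. -/
def mstXBFactor (x : ℕ → R) (b : ℤ → R) : MSTEntry → R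
  | .unmarked k => x k
  | .prime k => x k
  | .circ k => b k

/-- The weight `(xb)^T = ∏_{k∈T} x_k · ∏_{k'∈T} x_k · ∏_{k°∈T} b_k`. -/
def mstXBWeight (r : ℕ) (lam : ℕ → ℕ) (x : ℕ → R) (b : ℤ → R) (T : ℕ × ℕ → MSTEntry) : R :=
  ∏ i ∈ Finset.range r, ∏ j ∈ Finset.range (lam (i + 1)),
    mstXBFactor x b (T (i + 1, i + 1 + j))

/-- The weight `∏_{e ∈ T} b_{|e|}` of a row-strict flagged tableau. -/
def rstBWeight (r : ℕ) (kap nu : ℕ → ℕ) (b : ℤ → R) (t : ℕ × ℕ → ℕ) : R :=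
  ∏ i ∈ Finset.range r, ∏ j ∈ Finset.range (kap (i + 1) - nu (i + 1)),
    b (t (i + 1, nu (i + 1) + 1 + j) : ℤ)

/-- `s̃_{κ/ν,f}(b)`: the generating function of row-strict flagged tableaux with weight
`∏_{e ∈ T} b_{|e|}`. -/
def sTildeB (r : ℕ) (kap nu f : ℕ → ℕ) (b : ℤ → R) : R :=
  ∑ᶠ t ∈ {t : ℕ × ℕ → ℕ | IsRST r kap nu f t}, rstBWeight r kap nu b t

/-- `μ` (normalized to vanish outside `[1,r]`) is a strict partition contained in `λ`,
padded by zeros to `r` parts, such that `μ̄ = (μ_1, μ_2 + 1, …, μ_r + r - 1)` is a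
partition. -/
def IsBarMu (r : ℕ) (lam mu : ℕ → ℕ) : Prop :=
  (∀ i, i = 0 ∨ r < i → mu i = 0) ∧
  (∀ i, 1 ≤ i → i < r → mu (i + 1) ≤ mu i) ∧
  (∀ i, 1 ≤ i → i < r → 0 < mu (i + 1) → mu (i + 1) < mu i) ∧
  (∀ i, 1 ≤ i → i ≤ r → mu i ≤ lam i) ∧
  (∀ i, 1 ≤ i → i < r → mu (i + 1) + (i + 1) ≤ mu i + i)
namespace St3

open MSTEntry

lemma isCirc_le_of_le {a b : MSTEntry} (h : a.le b) : a.isCirc ≤ b.isCirc := by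
  rcases h with h | ⟨h, _⟩ <;> omega

lemma exists_circ_of_isCirc {a : MSTEntry} (h : a.isCirc ≠ 0) : ∃ k, a = .circ k := by
  cases a with
  | prime k => simp [MSTEntry.isCirc] at h
  | unmarked k => simp [MSTEntry.isCirc] at h
  | circ k => exact ⟨k, rfl⟩

lemma isCirc_circ (k : ℕ) : (MSTEntry.circ k).isCirc = 1 := rfl

lemma circ_le_circ {k m : ℕ} (h : (MSTEntry.circ k).le (MSTEntry.circ m)) : k ≤ m := by
  rcases h with h | ⟨_, h⟩
  · simp [MSTEntry.isCirc] at h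
  · simpa [MSTEntry.key] using h

lemma le_circ (a : MSTEntry) (h : a.isCirc = 0) (m : ℕ) : a.le (.circ m) := by
  left
  rw [isCirc_circ, h]
  omega

lemma val_circ (k : ℕ) : (MSTEntry.circ k).val = k := rfl

/-- Prefix characterization of a downward-closed predicate on `range L`. -/
lemma prefix_of_monotone {L m : ℕ} {P : ℕ → Prop} [DecidablePred P]
    (mono : ∀ j j', j ≤ j' → j' < L → P j' → P j)
    (hm : ((Finset.range L).filter P).card = m) {j : ℕ} (hj : j < L) : P j ↔ j < m := by
  constructor
  · intro hP
    by_contra hc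
    push_neg at hc
    have hsub : Finset.range (j + 1) ⊆ (Finset.range L).filter P := by
      intro a ha
      simp only [Finset.mem_range] at ha
      simp only [Finset.mem_filter, Finset.mem_range]
      exact ⟨by omega, mono a j (by omega) hj hP⟩
    have := Finset.card_le_card hsub
    simp only [Finset.card_range, hm] at this
    omega
  · intro hjm
    by_contra hP
    have hsub : (Finset.range L).filter P ⊆ Finset.range j := by
      intro a ha
      simp only [Finset.mem_filter, Finset.mem_range] at ha
      simp only [Finset.mem_range]
      by_contra hga
      push_neg at hga
      exact hP (mono j a hga ha.1 ha.2)
    have := Finset.card_le_card hsub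
    simp only [Finset.card_range, hm] at this
    omega

/-- Finiteness of a set of functions with common finite support and finite value set. -/
lemma finite_of_support {α β : Type*} (S : Set (α → β)) (K : Set α) (hK : K.Finite)
    (d : β) (V : Set β) (hV : V.Finite)
    (h1 : ∀ F ∈ S, ∀ a ∉ K, F a = d) (h2 : ∀ F ∈ S, ∀ a, F a ∈ V) : S.Finite := by
  have : Finite K := hK
  refine Set.Finite.of_finite_image (f := fun (F : α → β) (a : K) => F a.1) ?_ ?_
  · refine (Set.Finite.pi' fun _ : K => hV).subset ?_
    rintro g ⟨F, hF, rfl⟩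
    intro a
    exact h2 F hF a.1
  · intro F hF G hG h
    funext a
    by_cases ha : a ∈ K
    · exact congrFun h ⟨a, ha⟩
    · rw [h1 F hF a ha, h1 G hG a ha]

lemma finite_val_le (N : ℕ) : {e : MSTEntry | e.val ≤ N}.Finite := by
  refine Set.Finite.subset
    ((((Set.finite_Iic N).image MSTEntry.prime).union
      ((Set.finite_Iic N).image MSTEntry.unmarked)).union
      ((Set.finite_Iic N).image MSTEntry.circ)) ?_
  intro e he
  cases e with
  | prime k => exact Or.inl (Or.inl ⟨k, he, rfl⟩)
  | unmarked k => exact Or.inl (Or.inr ⟨k, he, rfl⟩)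
  | circ k => exact Or.inr ⟨k, he, rfl⟩

end St3
namespace St3

lemma mst_finite (n r : ℕ) (lam f : ℕ → ℕ) :
    {T : ℕ × ℕ → MSTEntry | IsMST n r lam f T}.Finite := by
  classical
  set B := (Finset.range (r + 1)).sup lam + r with hB
  set N := max n ((Finset.range (r + 1)).sup f) with hN
  refine finite_of_support _ {p : ℕ × ℕ | p.1 ≤ r ∧ p.2 ≤ B} ?_ (.unmarked 0)
    {e : MSTEntry | e.val ≤ N} (finite_val_le N) ?_ ?_
  · refine ((Set.finite_Iic r).prod (Set.finite_Iic B)).subset ?_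
    rintro ⟨a, c⟩ ⟨h1, h2⟩
    exact ⟨h1, h2⟩
  · rintro T hT p hp
    refine hT.1 p ?_
    rintro ⟨h1, h2, h3, h4⟩
    refine hp ⟨h2, le_trans h4 ?_⟩
    have : lam p.1 ≤ (Finset.range (r + 1)).sup lam :=
      Finset.le_sup (Finset.mem_range.mpr (by omega))
    omega
  · rintro T hT p
    by_cases hp : p ∈ shiftedDiag r lam
    · have hf : f p.1 ≤ (Finset.range (r + 1)).sup f :=
        Finset.le_sup (Finset.mem_range.mpr (by have := hp.2.1; omega))
      rcases he : T p with k | k | k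
      · have := hT.2.2.2.2.2.2.2.2 p hp k (Or.inr he)
        simp only [Set.mem_setOf_eq, MSTEntry.val]
        omega
      · have := hT.2.2.2.2.2.2.2.2 p hp k (Or.inl he)
        simp only [Set.mem_setOf_eq, MSTEntry.val]
        omega
      · have hle := hT.2.2.2.2.2.2.2.1 p hp
        rw [he] at hle
        have := circ_le_circ hle
        simp only [Set.mem_setOf_eq, MSTEntry.val]
        omega
    · rw [hT.1 p hp]
      simp [MSTEntry.val]

lemma rst_finite (r : ℕ) (kap nu f : ℕ → ℕ) :
    {t : ℕ × ℕ → ℕ | IsRST r kap nu f t}.Finite := by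
  classical
  refine finite_of_support _ {p : ℕ × ℕ | p.1 ≤ r ∧ p.2 ≤ (Finset.range (r + 1)).sup kap} ?_ 0
    (Set.Iic ((Finset.range (r + 1)).sup f)) (Set.finite_Iic _) ?_ ?_
  · refine ((Set.finite_Iic r).prod (Set.finite_Iic ((Finset.range (r + 1)).sup kap))).subset ?_
    rintro ⟨a, c⟩ ⟨h1, h2⟩
    exact ⟨h1, h2⟩
  · rintro t ht p hp
    refine ht.1 p ?_
    rintro ⟨h1, h2, h3, h4⟩
    refine hp ⟨h2, le_trans h4 ?_⟩
    exact Finset.le_sup (Finset.mem_range.mpr (by omega))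
  · rintro t ht p
    by_cases hp : p ∈ skewDiag r kap nu
    · have hf : f p.1 ≤ (Finset.range (r + 1)).sup f :=
        Finset.le_sup (Finset.mem_range.mpr (by have := hp.2.1; omega))
      exact Set.mem_Iic.mpr (le_trans (ht.2.2.2.2 p hp) hf)
    · rw [ht.1 p hp]
      simp

lemma barmu_finite (r : ℕ) (lam : ℕ → ℕ) : {mu : ℕ → ℕ | IsBarMu r lam mu}.Finite := by
  classical
  refine finite_of_support _ (Set.Iic r) (Set.finite_Iic r) 0
    (Set.Iic ((Finset.range (r + 1)).sup lam)) (Set.finite_Iic _) ?_ ?_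
  · rintro mu hmu i hi
    exact hmu.1 i (Or.inr (by simpa using hi))
  · rintro mu hmu i
    by_cases hi : 1 ≤ i ∧ i ≤ r
    · have h1 := hmu.2.2.2.1 i hi.1 hi.2
      have h2 : lam i ≤ (Finset.range (r + 1)).sup lam :=
        Finset.le_sup (Finset.mem_range.mpr (by omega))
      exact Set.mem_Iic.mpr (by omega)
    · have : mu i = 0 := hmu.1 i (by omega)
      simp [this]

end St3
namespace St3

open scoped Classical

/-- The number of non-circled entries in row `i` of `T` (zero outside `[1,r]`). -/
def muOfT (r : ℕ) (lam : ℕ → ℕ) (T : ℕ × ℕ → MSTEntry) : ℕ → ℕ := fun i =>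
  if 1 ≤ i ∧ i ≤ r then
    ((Finset.range (lam i)).filter (fun j => (T (i, i + j)).isCirc = 0)).card
  else 0

/-- Restriction of `T` to the shifted diagram of `mu`. -/
noncomputable def truncT (r : ℕ) (mu : ℕ → ℕ) (T : ℕ × ℕ → MSTEntry) : ℕ × ℕ → MSTEntry :=
  fun p => if p ∈ shiftedDiag r mu then T p else .unmarked 0

/-- The values of the circled entries of `T` (zero elsewhere). -/
def circT (T : ℕ × ℕ → MSTEntry) : ℕ × ℕ → ℕ := fun p => (T p).isCirc * (T p).val

/-- Glue a tableau on the shifted diagram of `mu` with circled values on `λ̄/μ̄`. -/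
noncomputable def glueT (r : ℕ) (lam mu : ℕ → ℕ) (T1 : ℕ × ℕ → MSTEntry) (t : ℕ × ℕ → ℕ) :
    ℕ × ℕ → MSTEntry := fun p =>
  if p ∈ shiftedDiag r mu then T1 p
  else if p ∈ skewDiag r (fun i => lam i + i - 1) (fun i => mu i + i - 1) then .circ (t p)
  else .unmarked 0

lemma mem_shiftedDiag {r : ℕ} {lam : ℕ → ℕ} {i j : ℕ} :
    (i, j) ∈ shiftedDiag r lam ↔ 1 ≤ i ∧ i ≤ r ∧ i ≤ j ∧ j ≤ lam i + i - 1 := Iff.rfl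

lemma mem_skewDiag {r : ℕ} {kap nu : ℕ → ℕ} {i j : ℕ} :
    (i, j) ∈ skewDiag r kap nu ↔ 1 ≤ i ∧ i ≤ r ∧ nu i < j ∧ j ≤ kap i := Iff.rfl

lemma box_mem {r : ℕ} {lam : ℕ → ℕ} (hpos : ∀ i, 1 ≤ i → i ≤ r → 0 < lam i)
    {i j : ℕ} (hi1 : 1 ≤ i) (hir : i ≤ r) (hj : j < lam i) :
    (i, i + j) ∈ shiftedDiag r lam := by
  have := hpos i hi1 hir
  exact mem_shiftedDiag.mpr ⟨hi1, hir, by omega, by omega⟩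

lemma lam_add_le {r : ℕ} {lam : ℕ → ℕ}
    (hstrict : ∀ i j, 1 ≤ i → i < j → j ≤ r → lam j < lam i)
    {i i' : ℕ} (h1 : 1 ≤ i) (h2 : i ≤ i') (h3 : i' ≤ r) : lam i' + i' ≤ lam i + i := by
  induction i' with
  | zero => omega
  | succ k ih =>
    rcases Nat.lt_or_ge i (k + 1) with h | h
    · have hik : i ≤ k := by omega
      have h4 := ih hik (by omega)
      have h5 : lam (k + 1) < lam k := hstrict k (k + 1) (by omega) (by omega) h3
      omega
    · have hik : i = k + 1 := by omega
      subst hik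
      omega

/-- In each row the entries are non-circled on a prefix of length `muOfT r lam T i`. -/
lemma circ_prefix {n r : ℕ} {lam f : ℕ → ℕ} {T : ℕ × ℕ → MSTEntry}
    (hpos : ∀ i, 1 ≤ i → i ≤ r → 0 < lam i) (hT : IsMST n r lam f T)
    {i : ℕ} (hi1 : 1 ≤ i) (hir : i ≤ r) {j : ℕ} (hj : j < lam i) :
    (T (i, i + j)).isCirc = 0 ↔ j < muOfT r lam T i := by
  have hmono : ∀ a c, a ≤ c → c < lam i → (T (i, i + c)).isCirc = 0 →
      (T (i, i + a)).isCirc = 0 := by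
    intro a c hac hc h0
    have hle := hT.2.2.1 i (i + a) (i + c) (box_mem hpos hi1 hir (by omega))
      (box_mem hpos hi1 hir hc) (by omega)
    have := isCirc_le_of_le hle
    omega
  rw [muOfT, if_pos ⟨hi1, hir⟩]
  exact prefix_of_monotone hmono rfl hj

lemma muOfT_le {r : ℕ} {lam : ℕ → ℕ} {T : ℕ × ℕ → MSTEntry}
    {i : ℕ} : muOfT r lam T i ≤ lam i := by
  rw [muOfT]
  split
  · exact le_trans (Finset.card_filter_le _ _) (by simp)
  · omega

lemma muOfT_zero {r : ℕ} {lam : ℕ → ℕ} {T : ℕ × ℕ → MSTEntry}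
    {i : ℕ} (h : ¬(1 ≤ i ∧ i ≤ r)) : muOfT r lam T i = 0 := by
  rw [muOfT, if_neg h]

end St3
namespace St3

/-- Non-circledness propagates upward along columns (in offset coordinates). -/
lemma col_circ {n r : ℕ} {lam f : ℕ → ℕ} {T : ℕ × ℕ → MSTEntry}
    (hpos : ∀ i, 1 ≤ i → i ≤ r → 0 < lam i)
    (hstrict : ∀ i j, 1 ≤ i → i < j → j ≤ r → lam j < lam i)
    (hT : IsMST n r lam f T)
    {i j' : ℕ} (hi : 1 ≤ i) (hir : i + 1 ≤ r) (hj : j' < lam (i + 1))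
    (h0 : (T (i + 1, i + 1 + j')).isCirc = 0) : (T (i, i + (j' + 1))).isCirc = 0 := by
  have hli : lam (i + 1) < lam i := hstrict i (i + 1) hi (by omega) hir
  have hmem1 : (i, i + (j' + 1)) ∈ shiftedDiag r lam :=
    box_mem hpos hi (by omega) (by omega)
  have hmem2 : (i + 1, i + 1 + j') ∈ shiftedDiag r lam :=
    box_mem hpos (by omega) hir hj
  have heq : i + (j' + 1) = i + 1 + j' := by omega
  rw [heq]
  have hle := hT.2.2.2.1 i (i + 1) (i + 1 + j') (by rw [← heq]; exact hmem1) hmem2 (by omega)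
  have := isCirc_le_of_le hle
  omega

/-- A fully circled row forces `lam k ≤ f k`. -/
lemma full_row_flag {n r : ℕ} {lam f : ℕ → ℕ} {T : ℕ × ℕ → MSTEntry}
    (hpos : ∀ i, 1 ≤ i → i ≤ r → 0 < lam i) (hT : IsMST n r lam f T)
    {k : ℕ} (hk1 : 1 ≤ k) (hkr : k ≤ r) (hm : muOfT r lam T k = 0) : lam k ≤ f k := by
  have hcirc : ∀ j, j < lam k → ∃ c, T (k, k + j) = .circ c ∧ j + 1 ≤ c := by
    intro j
    induction j with
    | zero =>
      intro hj
      have h0 : (T (k, k + 0)).isCirc ≠ 0 := by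
        intro h
        have := (circ_prefix hpos hT hk1 hkr hj).mp h
        omega
      obtain ⟨c, hc⟩ := exists_circ_of_isCirc h0
      refine ⟨c, hc, ?_⟩
      have := hT.2.1 (k, k + 0) (box_mem hpos hk1 hkr hj)
      rw [hc] at this
      simpa [val_circ] using this
    | succ j ih =>
      intro hj
      obtain ⟨c, hc, hcge⟩ := ih (by omega)
      have h0 : (T (k, k + (j + 1))).isCirc ≠ 0 := by
        intro h
        have := (circ_prefix hpos hT hk1 hkr hj).mp h
        omega
      obtain ⟨c', hc'⟩ := exists_circ_of_isCirc h0
      refine ⟨c', hc', ?_⟩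
      have := hT.2.2.2.2.2.2.1 k (k + j) (k + (j + 1)) c c'
        (box_mem hpos hk1 hkr (by omega)) (box_mem hpos hk1 hkr hj) (by omega) hc hc'
      omega
  have hlk := hpos k hk1 hkr
  obtain ⟨c, hc, hcge⟩ := hcirc (lam k - 1) (by omega)
  have hfl := hT.2.2.2.2.2.2.2.1 (k, k + (lam k - 1))
    (box_mem hpos hk1 hkr (by omega))
  rw [hc] at hfl
  have h2 : c ≤ f k := circ_le_circ hfl
  omega

/-- The key strict decrease `μ_{i+1} < μ_i` for `1 ≤ i < r`. -/
lemma mu_strict {n r : ℕ} {lam f : ℕ → ℕ} {T : ℕ × ℕ → MSTEntry}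
    (hpos : ∀ i, 1 ≤ i → i ≤ r → 0 < lam i)
    (hstrict : ∀ i j, 1 ≤ i → i < j → j ≤ r → lam j < lam i)
    (hlast : 2 ≤ r → f (r - 1) < lam (r - 1) ∨ f r < lam r)
    (hT : IsMST n r lam f T)
    {i : ℕ} (hi : 1 ≤ i) (hir : i < r) : muOfT r lam T (i + 1) < muOfT r lam T i := by
  by_contra hcon
  push_neg at hcon
  rcases Nat.eq_zero_or_pos (muOfT r lam T (i + 1)) with h0 | hposm
  · -- all lower rows are fully circled
    have hmi : muOfT r lam T i = 0 := by omega
    have hall : ∀ k, i ≤ k → k ≤ r → muOfT r lam T k = 0 := by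
      intro k hk1 hk2
      induction k with
      | zero => omega
      | succ k ih =>
        rcases Nat.lt_or_ge k i with h | h
        · have hik : i = k + 1 := by omega
          rw [← hik]
          exact hmi
        · have hmk : muOfT r lam T k = 0 := ih h (by omega)
          by_contra hne
          have hposk : 0 < muOfT r lam T (k + 1) := by omega
          have hlamk1 : 0 < lam (k + 1) := hpos (k + 1) (by omega) hk2
          have hnc : (T (k + 1, k + 1 + 0)).isCirc = 0 :=
            (circ_prefix hpos hT (by omega) hk2 hlamk1).mpr hposk
          have hup := col_circ hpos hstrict hT (by omega) hk2 hlamk1 hnc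
          have hlamk : lam (k + 1) < lam k := hstrict k (k + 1) (by omega) (by omega) hk2
          have hone : (1 : ℕ) < muOfT r lam T k :=
            (circ_prefix hpos hT (i := k) (by omega) (by omega) (j := 1)
              (by omega)).mp hup
          omega
    have h2r : 2 ≤ r := by omega
    have hf1 : lam (r - 1) ≤ f (r - 1) :=
      full_row_flag hpos hT (by omega) (by omega) (hall (r - 1) (by omega) (by omega))
    have hf2 : lam r ≤ f r :=
      full_row_flag hpos hT (by omega) (by omega) (hall r (by omega) (by omega))
    rcases hlast h2r with h | h <;> omega
  · -- muOfT r lam T (i+1) ≥ 1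
    have hle1 : muOfT r lam T (i + 1) ≤ lam (i + 1) := muOfT_le
    have h1 : (T (i + 1, i + 1 + (muOfT r lam T (i + 1) - 1))).isCirc = 0 :=
      (circ_prefix hpos hT (i := i + 1) (by omega) (by omega) (by omega)).mpr (by omega)
    have h2 := col_circ hpos hstrict hT hi hir (by omega) h1
    have heq : muOfT r lam T (i + 1) - 1 + 1 = muOfT r lam T (i + 1) := by omega
    rw [heq] at h2
    have hlam : lam (i + 1) < lam i := hstrict i (i + 1) hi (by omega) (by omega)
    have h3 : muOfT r lam T (i + 1) < muOfT r lam T i :=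
      (circ_prefix hpos hT hi (by omega) (j := muOfT r lam T (i + 1)) (by omega)).mp h2
    omega

end St3
namespace St3

lemma forward_barmu {n r : ℕ} {lam f : ℕ → ℕ} {T : ℕ × ℕ → MSTEntry}
    (hpos : ∀ i, 1 ≤ i → i ≤ r → 0 < lam i)
    (hstrict : ∀ i j, 1 ≤ i → i < j → j ≤ r → lam j < lam i)
    (hlast : 2 ≤ r → f (r - 1) < lam (r - 1) ∨ f r < lam r)
    (hT : IsMST n r lam f T) : IsBarMu r lam (muOfT r lam T) := by
  refine ⟨?_, ?_, ?_, ?_, ?_⟩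
  · intro i hi
    exact muOfT_zero (by omega)
  · intro i h1 h2
    have := mu_strict hpos hstrict hlast hT h1 h2
    omega
  · intro i h1 h2 _
    exact mu_strict hpos hstrict hlast hT h1 h2
  · intro i h1 h2
    exact muOfT_le
  · intro i h1 h2
    have := mu_strict hpos hstrict hlast hT h1 h2
    omega

lemma diag_nocirc {n r : ℕ} {lam f : ℕ → ℕ} {T : ℕ × ℕ → MSTEntry}
    (hpos : ∀ i, 1 ≤ i → i ≤ r → 0 < lam i) (hT : IsMST n r lam f T) :
    ∀ p ∈ shiftedDiag r (muOfT r lam T), (T p).isCirc = 0 := by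
  rintro ⟨i, j⟩ hp
  rw [mem_shiftedDiag] at hp
  obtain ⟨h1, h2, h3, h4⟩ := hp
  have hoff : j - i < muOfT r lam T i := by omega
  have hlt : j - i < lam i := lt_of_lt_of_le hoff muOfT_le
  have h5 := (circ_prefix hpos hT h1 h2 hlt).mpr hoff
  rwa [show i + (j - i) = j by omega] at h5

lemma mu_sub {n r : ℕ} {lam f : ℕ → ℕ} {T : ℕ × ℕ → MSTEntry} (hT : IsMST n r lam f T) :
    ∀ p ∈ shiftedDiag r (muOfT r lam T), p ∈ shiftedDiag r lam := by
  rintro ⟨i, j⟩ hp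
  rw [mem_shiftedDiag] at hp
  obtain ⟨h1, h2, h3, h4⟩ := hp
  have : muOfT r lam T i ≤ lam i := muOfT_le
  exact mem_shiftedDiag.mpr ⟨h1, h2, h3, by omega⟩

lemma forward_T1 {n r : ℕ} {lam f : ℕ → ℕ} {T : ℕ × ℕ → MSTEntry}
    (hpos : ∀ i, 1 ≤ i → i ≤ r → 0 < lam i) (hT : IsMST n r lam f T) :
    IsMST n r (muOfT r lam T) (fun _ => 0) (truncT r (muOfT r lam T) T) := by
  have heq : ∀ p ∈ shiftedDiag r (muOfT r lam T), truncT r (muOfT r lam T) T p = T p :=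
    fun p hp => if_pos hp
  refine ⟨?_, ?_, ?_, ?_, ?_, ?_, ?_, ?_, ?_⟩
  · intro p hp
    exact if_neg hp
  · intro p hp
    rw [heq p hp]
    exact hT.2.1 p (mu_sub hT p hp)
  · intro i j j' h h' hj
    rw [heq _ h, heq _ h']
    exact hT.2.2.1 i j j' (mu_sub hT _ h) (mu_sub hT _ h') hj
  · intro i i' j h h' hi
    rw [heq _ h, heq _ h']
    exact hT.2.2.2.1 i i' j (mu_sub hT _ h) (mu_sub hT _ h') hi
  · intro i i' j k k' h h' hi hk hk'
    rw [heq _ h] at hk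
    rw [heq _ h'] at hk'
    exact hT.2.2.2.2.1 i i' j k k' (mu_sub hT _ h) (mu_sub hT _ h') hi hk hk'
  · intro i j j' k k' h h' hj hk hk'
    rw [heq _ h] at hk
    rw [heq _ h'] at hk'
    exact hT.2.2.2.2.2.1 i j j' k k' (mu_sub hT _ h) (mu_sub hT _ h') hj hk hk'
  · intro i j j' k k' h h' hj hk hk'
    rw [heq _ h] at hk
    rw [heq _ h'] at hk'
    exact hT.2.2.2.2.2.2.1 i j j' k k' (mu_sub hT _ h) (mu_sub hT _ h') hj hk hk'
  · intro p hp
    refine le_circ _ ?_ _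
    rw [heq p hp]
    exact diag_nocirc hpos hT p hp
  · intro p hp k hk
    rw [heq p hp] at hk
    exact hT.2.2.2.2.2.2.2.2 p (mu_sub hT p hp) k hk

lemma skew_spec {n r : ℕ} {lam f : ℕ → ℕ} {T : ℕ × ℕ → MSTEntry}
    (hpos : ∀ i, 1 ≤ i → i ≤ r → 0 < lam i) (hT : IsMST n r lam f T)
    {i j : ℕ}
    (hp : (i, j) ∈ skewDiag r (fun i => lam i + i - 1) (fun i => muOfT r lam T i + i - 1)) :
    (i, j) ∈ shiftedDiag r lam ∧ ∃ c, T (i, j) = .circ c ∧ circT T (i, j) = c := by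
  rw [mem_skewDiag] at hp
  obtain ⟨h1, h2, h3, h4⟩ := hp
  try simp only at h3 h4
  have hlam1 : 0 < lam i := hpos i h1 h2
  have hij : i ≤ j := by omega
  have hmem : (i, j) ∈ shiftedDiag r lam := ⟨h1, h2, hij, h4⟩
  have hoff1 : j - i < lam i := by omega
  have hoff2 : ¬(j - i < muOfT r lam T i) := by omega
  have hiff := circ_prefix hpos hT h1 h2 hoff1
  rw [show i + (j - i) = j by omega] at hiff
  have hcne : (T (i, j)).isCirc ≠ 0 := fun h => hoff2 (hiff.mp h)
  obtain ⟨c, hc⟩ := exists_circ_of_isCirc hcne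
  refine ⟨hmem, c, hc, ?_⟩
  rw [circT, hc]
  simp [MSTEntry.isCirc, MSTEntry.val]

lemma forward_rst {n r : ℕ} {lam f : ℕ → ℕ} {T : ℕ × ℕ → MSTEntry}
    (hpos : ∀ i, 1 ≤ i → i ≤ r → 0 < lam i) (hT : IsMST n r lam f T) :
    IsRST r (fun i => lam i + i - 1) (fun i => muOfT r lam T i + i - 1) f (circT T) := by
  refine ⟨?_, ?_, ?_, ?_, ?_⟩
  · intro p hp
    by_cases hpl : p ∈ shiftedDiag r lam
    · obtain ⟨i, j⟩ := p
      obtain ⟨h1, h2, h3, h4⟩ := hpl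
      have hj : j ≤ muOfT r lam T i + i - 1 := by
        by_contra hcj
        push_neg at hcj
        exact hp ⟨h1, h2, by simpa using hcj, by simpa using h4⟩
      have hnc := diag_nocirc hpos hT (i, j) ⟨h1, h2, h3, hj⟩
      simp [circT, hnc]
    · simp [circT, hT.1 p hpl, MSTEntry.isCirc, MSTEntry.val]
  · rintro ⟨i, j⟩ hp
    obtain ⟨hmem, c, hc, hct⟩ := skew_spec hpos hT hp
    rw [hct]
    have := hT.2.1 _ hmem
    rw [hc] at this
    simpa [MSTEntry.val] using this
  · intro i j j' h h' hjj
    obtain ⟨hmem, c, hc, hct⟩ := skew_spec hpos hT h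
    obtain ⟨hmem', c', hc', hct'⟩ := skew_spec hpos hT h'
    rw [hct, hct']
    exact hT.2.2.2.2.2.2.1 i j j' c c' hmem hmem' hjj hc hc'
  · intro i i' j h h' hii
    obtain ⟨hmem, c, hc, hct⟩ := skew_spec hpos hT h
    obtain ⟨hmem', c', hc', hct'⟩ := skew_spec hpos hT h'
    rw [hct, hct']
    have hle := hT.2.2.2.1 i i' j hmem hmem' hii
    rw [hc, hc'] at hle
    exact circ_le_circ hle
  · rintro ⟨i, j⟩ hp
    obtain ⟨hmem, c, hc, hct⟩ := skew_spec hpos hT hp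
    rw [hct]
    have hle := hT.2.2.2.2.2.2.2.1 _ hmem
    rw [hc] at hle
    exact circ_le_circ hle

lemma forward_glue {n r : ℕ} {lam f : ℕ → ℕ} {T : ℕ × ℕ → MSTEntry}
    (hpos : ∀ i, 1 ≤ i → i ≤ r → 0 < lam i) (hT : IsMST n r lam f T) :
    glueT r lam (muOfT r lam T) (truncT r (muOfT r lam T) T) (circT T) = T := by
  funext p
  rw [glueT]
  by_cases h1 : p ∈ shiftedDiag r (muOfT r lam T)
  · rw [if_pos h1, truncT, if_pos h1]
  · rw [if_neg h1]
    by_cases h2 : p ∈ skewDiag r (fun i => lam i + i - 1)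
        (fun i => muOfT r lam T i + i - 1)
    · rw [if_pos h2]
      obtain ⟨i, j⟩ := p
      obtain ⟨hmem, c, hc, hct⟩ := skew_spec hpos hT h2
      rw [hct, hc]
    · rw [if_neg h2]
      by_cases h3 : p ∈ shiftedDiag r lam
      · exfalso
        obtain ⟨i, j⟩ := p
        obtain ⟨hh1, hh2, hh3, hh4⟩ := h3
        by_cases hj : j ≤ muOfT r lam T i + i - 1
        · exact h1 ⟨hh1, hh2, hh3, hj⟩
        · exact h2 ⟨hh1, hh2, by simp; omega, by simpa using hh4⟩
      · rw [hT.1 p h3]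

end St3
namespace St3

lemma factor_nocirc {R : Type*} [CommRing R] (x z z' : ℕ → R) (b : ℤ → R) (p : ℕ × ℕ)
    {e : MSTEntry} (h : e.isCirc = 0) : mstFactor x z b p e = mstFactor x z' b p e := by
  cases e with
  | prime k => rfl
  | unmarked k => rfl
  | circ k => simp [MSTEntry.isCirc] at h

lemma weight_split {R : Type*} [CommRing R] {n r : ℕ} {lam f : ℕ → ℕ}
    {T : ℕ × ℕ → MSTEntry} (x z : ℕ → R) (b : ℤ → R)
    (hpos : ∀ i, 1 ≤ i → i ≤ r → 0 < lam i) (hT : IsMST n r lam f T) :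
    mstWeight r lam x z b T =
      mstWeight r (muOfT r lam T) x (fun _ => 0) b (truncT r (muOfT r lam T) T) *
        rstWeight r (fun i => lam i + i - 1) (fun i => muOfT r lam T i + i - 1) z
          (bext b) (circT T) := by
  rw [mstWeight, mstWeight, rstWeight, ← Finset.prod_mul_distrib]
  refine Finset.prod_congr rfl ?_
  intro i hi
  beta_reduce
  rw [Finset.mem_range] at hi
  have h1 : 1 ≤ i + 1 := by omega
  have h2 : i + 1 ≤ r := by omega
  have hML : muOfT r lam T (i + 1) ≤ lam (i + 1) := muOfT_le
  have hpos1 : 0 < lam (i + 1) := hpos (i + 1) h1 h2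
  have hsplit := Finset.prod_range_add
    (fun j => mstFactor x z b (i + 1, i + 1 + j) (T (i + 1, i + 1 + j)))
    (muOfT r lam T (i + 1)) (lam (i + 1) - muOfT r lam T (i + 1))
  rw [show muOfT r lam T (i + 1) + (lam (i + 1) - muOfT r lam T (i + 1)) = lam (i + 1)
    from by omega] at hsplit
  rw [hsplit]
  have hkapnu : lam (i + 1) + (i + 1) - 1 - (muOfT r lam T (i + 1) + (i + 1) - 1)
      = lam (i + 1) - muOfT r lam T (i + 1) := by omega
  rw [hkapnu]
  congr 1
  · refine Finset.prod_congr rfl ?_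
    intro j hj
    rw [Finset.mem_range] at hj
    have hmem_mu : (i + 1, i + 1 + j) ∈ shiftedDiag r (muOfT r lam T) :=
      mem_shiftedDiag.mpr ⟨h1, h2, by omega, by omega⟩
    rw [truncT, if_pos hmem_mu]
    exact factor_nocirc x z _ b _ (diag_nocirc hpos hT _ hmem_mu)
  · refine Finset.prod_congr rfl ?_
    intro j hj
    rw [Finset.mem_range] at hj
    have hnu : muOfT r lam T (i + 1) + (i + 1) - 1 + 1 + j
        = i + 1 + (muOfT r lam T (i + 1) + j) := by omega
    rw [hnu]
    have hskew : (i + 1, i + 1 + (muOfT r lam T (i + 1) + j)) ∈ skewDiag r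
        (fun i => lam i + i - 1) (fun i => muOfT r lam T i + i - 1) :=
      mem_skewDiag.mpr ⟨h1, h2,
        show muOfT r lam T (i + 1) + (i + 1) - 1 < i + 1 + (muOfT r lam T (i + 1) + j)
          from by omega,
        show i + 1 + (muOfT r lam T (i + 1) + j) ≤ lam (i + 1) + (i + 1) - 1
          from by omega⟩
    obtain ⟨hmem, c, hc, hct⟩ := skew_spec hpos hT hskew
    rw [hct, hc]
    simp only [mstFactor]
    refine congrArg₂ (· + ·) rfl (congrArg (bext b) ?_)
    omega

end St3
namespace St3

lemma le_refl_mst (a : MSTEntry) : a.le a := Or.inr ⟨rfl, le_refl _⟩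

lemma circ_le_circ_of_le {k m : ℕ} (h : k ≤ m) : (MSTEntry.circ k).le (.circ m) :=
  Or.inr ⟨rfl, h⟩

lemma mubar_le {r : ℕ} {lam mu : ℕ → ℕ} (hmu : IsBarMu r lam mu)
    {i i' : ℕ} (h1 : 1 ≤ i) (h2 : i ≤ i') (h3 : i' ≤ r) : mu i' + i' ≤ mu i + i := by
  induction i' with
  | zero => omega
  | succ k ih =>
    rcases Nat.lt_or_ge i (k + 1) with h | h
    · have hik : i ≤ k := by omega
      have h4 := ih hik (by omega)
      have h5 := hmu.2.2.2.2 k (by omega) (by omega)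
      omega
    · have hik : i = k + 1 := by omega
      subst hik
      omega

lemma nocirc_of_zeroflag {n r : ℕ} {mu : ℕ → ℕ} {T1 : ℕ × ℕ → MSTEntry}
    (hT1 : IsMST n r mu (fun _ => 0) T1) :
    ∀ p ∈ shiftedDiag r mu, (T1 p).isCirc = 0 := by
  intro p hp
  rcases he : T1 p with k | k | k
  · rfl
  · rfl
  · exfalso
    have hfl := hT1.2.2.2.2.2.2.2.1 p hp
    rw [he] at hfl
    have hk : k ≤ 0 := circ_le_circ hfl
    have hval := hT1.2.1 p hp
    rw [he] at hval
    have : 1 ≤ k := hval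
    omega

section Backward

variable {n r : ℕ} {lam f mu : ℕ → ℕ} {T1 : ℕ × ℕ → MSTEntry} {t : ℕ × ℕ → ℕ}

lemma mu_subset (hmu : IsBarMu r lam mu) :
    ∀ p ∈ shiftedDiag r mu, p ∈ shiftedDiag r lam := by
  rintro ⟨i, j⟩ hp
  rw [mem_shiftedDiag] at hp
  obtain ⟨h1, h2, h3, h4⟩ := hp
  have := hmu.2.2.2.1 i h1 h2
  exact mem_shiftedDiag.mpr ⟨h1, h2, h3, by omega⟩

lemma skew_subset :
    ∀ p ∈ skewDiag r (fun i => lam i + i - 1) (fun i => mu i + i - 1),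
      p ∈ shiftedDiag r lam := by
  rintro ⟨i, j⟩ hp
  rw [mem_skewDiag] at hp
  obtain ⟨h1, h2, h3, h4⟩ := hp
  try simp only at h3 h4
  exact mem_shiftedDiag.mpr ⟨h1, h2, by omega, h4⟩

lemma skew_disj :
    ∀ p ∈ skewDiag r (fun i => lam i + i - 1) (fun i => mu i + i - 1),
      p ∉ shiftedDiag r mu := by
  rintro ⟨i, j⟩ hp hq
  rw [mem_skewDiag] at hp
  rw [mem_shiftedDiag] at hq
  have h3 := hp.2.2.1
  try simp only at h3
  have h4 := hq.2.2.2
  omega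

lemma region {i j : ℕ} (hp : (i, j) ∈ shiftedDiag r lam) :
    (i, j) ∈ shiftedDiag r mu ∨
      (i, j) ∈ skewDiag r (fun i => lam i + i - 1) (fun i => mu i + i - 1) := by
  rw [mem_shiftedDiag] at hp
  obtain ⟨h1, h2, h3, h4⟩ := hp
  by_cases hj : j ≤ mu i + i - 1
  · exact Or.inl (mem_shiftedDiag.mpr ⟨h1, h2, h3, hj⟩)
  · exact Or.inr (mem_skewDiag.mpr ⟨h1, h2,
      show mu i + i - 1 < j from by omega, h4⟩)

lemma glue_mu {p : ℕ × ℕ} (hp : p ∈ shiftedDiag r mu) :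
    glueT r lam mu T1 t p = T1 p := if_pos hp

lemma glue_skew {p : ℕ × ℕ}
    (hp : p ∈ skewDiag r (fun i => lam i + i - 1) (fun i => mu i + i - 1)) :
    glueT r lam mu T1 t p = .circ (t p) := by
  rw [glueT, if_neg (skew_disj p hp), if_pos hp]

lemma glue_out {p : ℕ × ℕ} (h1 : p ∉ shiftedDiag r mu)
    (h2 : p ∉ skewDiag r (fun i => lam i + i - 1) (fun i => mu i + i - 1)) :
    glueT r lam mu T1 t p = .unmarked 0 := by
  rw [glueT, if_neg h1, if_neg h2]

lemma backward_mst (hmu : IsBarMu r lam mu) (hT1 : IsMST n r mu (fun _ => 0) T1)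
    (ht : IsRST r (fun i => lam i + i - 1) (fun i => mu i + i - 1) f t) :
    IsMST n r lam f (glueT r lam mu T1 t) := by
  refine ⟨?_, ?_, ?_, ?_, ?_, ?_, ?_, ?_, ?_⟩
  · -- normalization
    intro p hp
    refine glue_out (fun h => hp (mu_subset hmu p h)) (fun h => hp (skew_subset p h))
  · -- values ≥ 1
    rintro ⟨i, j⟩ hp
    rcases region (mu := mu) hp with h | h
    · rw [glue_mu h]
      exact hT1.2.1 _ h
    · rw [glue_skew h]
      exact ht.2.1 _ h
  · -- weak increase along rows
    intro i j j' h h' hjj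
    rcases region (mu := mu) h' with h2 | h2
    · have hmem : (i, j) ∈ shiftedDiag r mu := by
        have hh := mem_shiftedDiag.mp h
        have hh2 := mem_shiftedDiag.mp h2
        have hb := hh2.2.2.2
        exact mem_shiftedDiag.mpr ⟨hh.1, hh.2.1, hh.2.2.1, by omega⟩
      rw [glue_mu hmem, glue_mu h2]
      exact hT1.2.2.1 i j j' hmem h2 hjj
    · rcases region (mu := mu) h with h1 | h1
      · rw [glue_mu h1, glue_skew h2]
        exact le_circ _ (nocirc_of_zeroflag hT1 _ h1) _
      · rw [glue_skew h1, glue_skew h2]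
        rcases Nat.eq_or_lt_of_le hjj with he | hlt
        · subst he
          exact le_refl_mst _
        · exact circ_le_circ_of_le (le_of_lt (ht.2.2.1 i j j' h1 h2 hlt))
  · -- weak increase along columns
    intro i i' j h h' hii
    rcases region (mu := mu) h' with h2 | h2
    · have hmem : (i, j) ∈ shiftedDiag r mu := by
        have hh := mem_shiftedDiag.mp h
        have hh2 := mem_shiftedDiag.mp h2
        have hbar := mubar_le hmu hh.1 hii hh2.2.1
        have hb := hh2.2.2.2
        exact mem_shiftedDiag.mpr ⟨hh.1, hh.2.1, hh.2.2.1, by omega⟩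
      rw [glue_mu hmem, glue_mu h2]
      exact hT1.2.2.2.1 i i' j hmem h2 hii
    · rcases region (mu := mu) h with h1 | h1
      · rw [glue_mu h1, glue_skew h2]
        exact le_circ _ (nocirc_of_zeroflag hT1 _ h1) _
      · rw [glue_skew h1, glue_skew h2]
        exact circ_le_circ_of_le (ht.2.2.2.1 i i' j h1 h2 hii)
  · -- unmarked strictly increase along columns
    intro i i' j k k' h h' hii hk hk'
    have h1 : (i, j) ∈ shiftedDiag r mu := by
      rcases region (mu := mu) h with h1 | h1
      · exact h1
      · rw [glue_skew h1] at hk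
        exact absurd hk (by simp)
    have h2 : (i', j) ∈ shiftedDiag r mu := by
      rcases region (mu := mu) h' with h2 | h2
      · exact h2
      · rw [glue_skew h2] at hk'
        exact absurd hk' (by simp)
    rw [glue_mu h1] at hk
    rw [glue_mu h2] at hk'
    exact hT1.2.2.2.2.1 i i' j k k' h1 h2 hii hk hk'
  · -- primed strictly increase along rows
    intro i j j' k k' h h' hjj hk hk'
    have h1 : (i, j) ∈ shiftedDiag r mu := by
      rcases region (mu := mu) h with h1 | h1
      · exact h1
      · rw [glue_skew h1] at hk
        exact absurd hk (by simp)
    have h2 : (i, j') ∈ shiftedDiag r mu := by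
      rcases region (mu := mu) h' with h2 | h2
      · exact h2
      · rw [glue_skew h2] at hk'
        exact absurd hk' (by simp)
    rw [glue_mu h1] at hk
    rw [glue_mu h2] at hk'
    exact hT1.2.2.2.2.2.1 i j j' k k' h1 h2 hjj hk hk'
  · -- circled strictly increase along rows
    intro i j j' k k' h h' hjj hk hk'
    have h1 : (i, j) ∈ skewDiag r (fun i => lam i + i - 1) (fun i => mu i + i - 1) := by
      rcases region (mu := mu) h with h1 | h1
      · rw [glue_mu h1] at hk
        have := nocirc_of_zeroflag hT1 _ h1
        rw [hk] at this
        exact absurd this (by simp [MSTEntry.isCirc])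
      · exact h1
    have h2 : (i, j') ∈ skewDiag r (fun i => lam i + i - 1) (fun i => mu i + i - 1) := by
      rcases region (mu := mu) h' with h2 | h2
      · rw [glue_mu h2] at hk'
        have := nocirc_of_zeroflag hT1 _ h2
        rw [hk'] at this
        exact absurd this (by simp [MSTEntry.isCirc])
      · exact h2
    rw [glue_skew h1] at hk
    rw [glue_skew h2] at hk'
    have hkk : t (i, j) = k := by injection hk
    have hkk' : t (i, j') = k' := by injection hk'
    rw [← hkk, ← hkk']
    exact ht.2.2.1 i j j' h1 h2 hjj
  · -- flag
    rintro ⟨i, j⟩ hp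
    rcases region (mu := mu) hp with h | h
    · rw [glue_mu h]
      exact le_circ _ (nocirc_of_zeroflag hT1 _ h) _
    · rw [glue_skew h]
      exact circ_le_circ_of_le (ht.2.2.2.2 _ h)
  · -- bounded by n
    rintro ⟨i, j⟩ hp k hk
    have h1 : (i, j) ∈ shiftedDiag r mu := by
      rcases region (mu := mu) hp with h1 | h1
      · exact h1
      · rw [glue_skew h1] at hk
        rcases hk with hk | hk <;> exact absurd hk (by simp)
    rw [glue_mu h1] at hk
    exact hT1.2.2.2.2.2.2.2.2 _ h1 k hk

lemma glue_muOf (hpos : ∀ i, 1 ≤ i → i ≤ r → 0 < lam i)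
    (hmu : IsBarMu r lam mu) (hT1 : IsMST n r mu (fun _ => 0) T1) :
    muOfT r lam (glueT r lam mu T1 t) = mu := by
  funext i
  by_cases hi : 1 ≤ i ∧ i ≤ r
  · rw [muOfT, if_pos hi]
    have hfil : (Finset.range (lam i)).filter
        (fun j => ((glueT r lam mu T1 t) (i, i + j)).isCirc = 0) = Finset.range (mu i) := by
      ext j
      simp only [Finset.mem_filter, Finset.mem_range]
      constructor
      · rintro ⟨hj, hc⟩
        by_contra hge
        push_neg at hge
        have hskew : (i, i + j) ∈ skewDiag r (fun i => lam i + i - 1)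
            (fun i => mu i + i - 1) :=
          mem_skewDiag.mpr ⟨hi.1, hi.2,
            show mu i + i - 1 < i + j from by omega,
            show i + j ≤ lam i + i - 1 from by omega⟩
        rw [glue_skew hskew] at hc
        simp [MSTEntry.isCirc] at hc
      · intro hj
        have hmul : mu i ≤ lam i := hmu.2.2.2.1 i hi.1 hi.2
        have hmem : (i, i + j) ∈ shiftedDiag r mu :=
          mem_shiftedDiag.mpr ⟨hi.1, hi.2, by omega, by omega⟩
        refine ⟨by omega, ?_⟩
        rw [glue_mu hmem]
        exact nocirc_of_zeroflag hT1 _ hmem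
    rw [hfil, Finset.card_range]
  · rw [muOfT_zero hi]
    exact (hmu.1 i (by omega)).symm

lemma glue_trunc (hT1 : IsMST n r mu (fun _ => 0) T1) :
    truncT r mu (glueT r lam mu T1 t) = T1 := by
  funext p
  by_cases hp : p ∈ shiftedDiag r mu
  · rw [truncT, if_pos hp, glue_mu hp]
  · rw [truncT, if_neg hp, hT1.1 p hp]

lemma glue_circT (hT1 : IsMST n r mu (fun _ => 0) T1)
    (ht : IsRST r (fun i => lam i + i - 1) (fun i => mu i + i - 1) f t) :
    circT (glueT r lam mu T1 t) = t := by
  funext p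
  by_cases hp : p ∈ shiftedDiag r mu
  · have h0 : t p = 0 := by
      refine ht.1 p ?_
      intro hq
      exact skew_disj p hq hp
    rw [circT, glue_mu hp, nocirc_of_zeroflag hT1 _ hp, h0, Nat.zero_mul]
  · by_cases hq : p ∈ skewDiag r (fun i => lam i + i - 1) (fun i => mu i + i - 1)
    · rw [circT, glue_skew hq]
      simp [MSTEntry.isCirc, MSTEntry.val]
    · rw [circT, glue_out hp hq, ht.1 p hq]
      rfl

end Backward

end St3

open St3

/-- Decomposition of the flagged factorial Q-function into factorial Q-functions and
row-strict flagged skew factorial Schur polynomials:  if `r ≥ 2` implies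
`λ_{r−1} > f_{r−1}` or `λ_r > f_r`, then
`Q_{λ,f}(x;z|b) = Σ_μ Q_μ(x|b) · (s̃_{λ̄/μ̄,f}(z|b))^⋆`, the sum over strict partitions
`μ ⊆ λ` (padded by zeros to `r` parts) with `μ̄` a partition, where `⋆` is the
substitution `b_{−i} ↦ −b_{i+1}` (`i ≥ 0`).  It holds for every number `n` of
x-variables. -/
theorem statement_3 (R : Type*) [CommRing R] (n r : ℕ) (lam f : ℕ → ℕ)
    (x z : ℕ → R) (b : ℤ → R)
    (hpos : ∀ i, 1 ≤ i → i ≤ r → 0 < lam i)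
    (hstrict : ∀ i j, 1 ≤ i → i < j → j ≤ r → lam j < lam i)
    (hlast : 2 ≤ r → f (r - 1) < lam (r - 1) ∨ f r < lam r) :
    Qflag n r lam f x z b =
      ∑ᶠ mu ∈ {mu : ℕ → ℕ | IsBarMu r lam mu},
        QIvanov n r mu x b *
          sTilde r (fun i => lam i + i - 1) (fun i => mu i + i - 1) f z (bext b) := by
  classical
  have hS := barmu_finite r lam
  have hM := mst_finite n r lam f
  have hM1 : ∀ m : ℕ → ℕ, {T : ℕ × ℕ → MSTEntry | IsMST n r m (fun _ => 0) T}.Finite :=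
    fun m => mst_finite n r m (fun _ => 0)
  have hR : ∀ m : ℕ → ℕ,
      {t : ℕ × ℕ → ℕ | IsRST r (fun i => lam i + i - 1) (fun i => m i + i - 1) f t}.Finite :=
    fun m => rst_finite r _ _ f
  calc Qflag n r lam f x z b
      = ∑ T ∈ hM.toFinset, mstWeight r lam x z b T := by
        rw [Qflag, finsum_mem_eq_finite_toFinset_sum _ hM]
    _ = ∑ q ∈ hS.toFinset.sigma (fun m => (hM1 m).toFinset ×ˢ (hR m).toFinset),
          mstWeight r q.1 x (fun _ => 0) b q.2.1 *
            rstWeight r (fun i => lam i + i - 1) (fun i => q.1 i + i - 1) z (bext b)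
              q.2.2 := by
        refine Finset.sum_nbij'
          (fun T => ⟨muOfT r lam T, (truncT r (muOfT r lam T) T, circT T)⟩)
          (fun q => glueT r lam q.1 q.2.1 q.2.2) ?_ ?_ ?_ ?_ ?_
        · intro T hT
          rw [Set.Finite.mem_toFinset] at hT
          simp only [Finset.mem_sigma, Finset.mem_product, Set.Finite.mem_toFinset]
          exact ⟨forward_barmu hpos hstrict hlast hT, forward_T1 hpos hT,
            forward_rst hpos hT⟩
        · intro q hq
          simp only [Finset.mem_sigma, Finset.mem_product, Set.Finite.mem_toFinset] at hq
          rw [Set.Finite.mem_toFinset]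
          exact backward_mst hq.1 hq.2.1 hq.2.2
        · intro T hT
          rw [Set.Finite.mem_toFinset] at hT
          exact forward_glue hpos hT
        · intro q hq
          simp only [Finset.mem_sigma, Finset.mem_product, Set.Finite.mem_toFinset] at hq
          obtain ⟨m1, T1, t1⟩ := q
          obtain ⟨hq1, hq2, hq3⟩ := hq
          have h1 : muOfT r lam (glueT r lam m1 T1 t1) = m1 := glue_muOf hpos hq1 hq2
          have h2 : truncT r m1 (glueT r lam m1 T1 t1) = T1 := glue_trunc hq2
          have h3 : circT (glueT r lam m1 T1 t1) = t1 := glue_circT hq2 hq3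
          simp only
          rw [h1, h2, h3]
        · intro T hT
          rw [Set.Finite.mem_toFinset] at hT
          exact weight_split x z b hpos hT
    _ = ∑ m ∈ hS.toFinset,
          QIvanov n r m x b *
            sTilde r (fun i => lam i + i - 1) (fun i => m i + i - 1) f z (bext b) := by
        rw [Finset.sum_sigma]
        refine Finset.sum_congr rfl ?_
        intro m hm
        rw [Finset.sum_product, QIvanov, Qflag,
          finsum_mem_eq_finite_toFinset_sum _ (hM1 m), sTilde,
          finsum_mem_eq_finite_toFinset_sum _ (hR m), Finset.sum_mul_sum]
    _ = ∑ᶠ mu ∈ {mu : ℕ → ℕ | IsBarMu r lam mu},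
          QIvanov n r mu x b *
            sTilde r (fun i => lam i + i - 1) (fun i => mu i + i - 1) f z (bext b) := by
        rw [finsum_mem_eq_finite_toFinset_sum _ hS]
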